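/- Fix an integer n ≥ 1 and a real number t with 0 < t < 1. Let x¹,…,x^χ ∈ {0,1}ⁿ be distinct bit strings and let G be the χ×χ matrix with entries G_{ij} = t^{|xⁱ ⊕ xʲ|}, where |·| is Hamming weight and ⊕ is bitwise XOR. Then G is invertible, positive definite, and Σ_{i,j} (G⁻¹)_{ij} ≤ χ. -/

import Mathlib

open scoped BigOperators
open Finset

/-- The kernel quadratic form `∑ a b, y a * y b * t^{hammingDist a b}` over the cube. -/
noncomputable def gramQ (t : ℝ) (n : ℕ) (y : (Fin n → Bool) → ℝ) : ℝ :=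
  ∑ a : Fin n → Bool, ∑ b : Fin n → Bool, y a * y b * t ^ hammingDist a b

lemma hammingDist_cons (n : ℕ) (c c' : Bool) (z w : Fin n → Bool) :
    hammingDist (Fin.cons c z : Fin (n+1) → Bool) (Fin.cons c' w)
      = (if c = c' then 0 else 1) + hammingDist z w := by
  unfold hammingDist
  rw [Finset.card_filter, Finset.card_filter, Fin.sum_univ_succ]
  simp [Fin.cons_succ, Fin.cons_zero]

lemma hammingDist_zero (a b : Fin 0 → Bool) : hammingDist a b = 0 := by
  simp [hammingDist]

lemma sum_cube_succ (n : ℕ) (F : (Fin (n+1) → Bool) → ℝ) :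
    ∑ a : Fin (n+1) → Bool, F a
      = (∑ z : Fin n → Bool, F (Fin.cons false z)) + ∑ z : Fin n → Bool, F (Fin.cons true z) := by
  rw [← (Fin.consEquiv (fun _ : Fin (n+1) => Bool)).sum_comp, Fintype.sum_prod_type,
    Fintype.sum_bool]
  exact add_comm _ _

lemma gramQ_zero (y : (Fin 0 → Bool) → ℝ) :
    gramQ t 0 y = y (fun i => i.elim0) * y (fun i => i.elim0) := by
  unfold gramQ
  rw [Fintype.sum_subsingleton _ (fun i : Fin 0 => i.elim0)]
  rw [Fintype.sum_subsingleton _ (fun i : Fin 0 => i.elim0)]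
  rw [hammingDist_zero, pow_zero, mul_one]

lemma gramQ_succ (t : ℝ) (n : ℕ) (y : (Fin (n+1) → Bool) → ℝ) :
    gramQ t (n+1) y
      = t * gramQ t n (fun z => y (Fin.cons false z) + y (Fin.cons true z))
        + (1 - t) * (gramQ t n (fun z => y (Fin.cons false z))
            + gramQ t n (fun z => y (Fin.cons true z))) := by
  have inner_split : ∀ (c : Bool) (z : Fin n → Bool),
      (∑ b : Fin (n+1) → Bool,
          y (Fin.cons c z) * y b * t ^ hammingDist (Fin.cons c z : Fin (n+1) → Bool) b)
        = (∑ w : Fin n → Bool, y (Fin.cons c z) * y (Fin.cons false w)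
              * ((if c = false then 1 else t) * t ^ hammingDist z w))
          + ∑ w : Fin n → Bool, y (Fin.cons c z) * y (Fin.cons true w)
              * ((if c = true then 1 else t) * t ^ hammingDist z w) := by
    intro c z
    rw [sum_cube_succ n (fun b => y (Fin.cons c z) * y b
        * t ^ hammingDist (Fin.cons c z : Fin (n+1) → Bool) b)]
    congr 1
    · apply Finset.sum_congr rfl
      intro w _
      rw [hammingDist_cons, pow_add]
      cases c <;> simp
    · apply Finset.sum_congr rfl
      intro w _
      rw [hammingDist_cons, pow_add]
      cases c <;> simp
  have e1 : gramQ t (n+1) y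
      = (∑ z : Fin n → Bool, ∑ b : Fin (n+1) → Bool,
          y (Fin.cons false z) * y b * t ^ hammingDist (Fin.cons false z : Fin (n+1) → Bool) b)
        + ∑ z : Fin n → Bool, ∑ b : Fin (n+1) → Bool,
          y (Fin.cons true z) * y b * t ^ hammingDist (Fin.cons true z : Fin (n+1) → Bool) b :=
    sum_cube_succ n _
  rw [e1, Finset.sum_congr rfl fun z _ => inner_split false z,
    Finset.sum_congr rfl fun z _ => inner_split true z]
  simp only [eq_self_iff_true, if_true, Bool.true_eq_false, Bool.false_eq_true, if_false, one_mul]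
  rw [Finset.sum_add_distrib, Finset.sum_add_distrib]
  have expand2 : gramQ t n (fun z => y (Fin.cons false z) + y (Fin.cons true z))
      = gramQ t n (fun z => y (Fin.cons false z)) + gramQ t n (fun z => y (Fin.cons true z))
        + ((∑ z : Fin n → Bool, ∑ w : Fin n → Bool,
            y (Fin.cons false z) * y (Fin.cons true w) * t ^ hammingDist z w)
          + ∑ z : Fin n → Bool, ∑ w : Fin n → Bool,
            y (Fin.cons true z) * y (Fin.cons false w) * t ^ hammingDist z w) := by
    unfold gramQ
    rw [← Finset.sum_add_distrib, ← Finset.sum_add_distrib, ← Finset.sum_add_distrib]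
    beta_reduce
    apply Finset.sum_congr rfl
    intro z _
    rw [← Finset.sum_add_distrib, ← Finset.sum_add_distrib, ← Finset.sum_add_distrib]
    apply Finset.sum_congr rfl
    intro w _
    ring
  rw [expand2]
  unfold gramQ
  have m1 : ∀ (f g : (Fin n → Bool) → ℝ),
      (∑ z : Fin n → Bool, ∑ w : Fin n → Bool, f z * g w * (t * t ^ hammingDist z w))
        = t * ∑ z : Fin n → Bool, ∑ w : Fin n → Bool, f z * g w * t ^ hammingDist z w := by
    intro f g
    rw [Finset.mul_sum]
    apply Finset.sum_congr rfl
    intro z _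
    rw [Finset.mul_sum]
    apply Finset.sum_congr rfl
    intro w _
    ring
  rw [m1, m1]
  ring

lemma gramQ_nonneg (t : ℝ) (ht0 : 0 < t) (ht1 : t < 1) :
    ∀ (n : ℕ) (y : (Fin n → Bool) → ℝ), 0 ≤ gramQ t n y := by
  intro n
  induction n with
  | zero =>
    intro y
    rw [gramQ_zero]
    exact mul_self_nonneg _
  | succ n ih =>
    intro y
    rw [gramQ_succ]
    have h1 := ih (fun z => y (Fin.cons false z) + y (Fin.cons true z))
    have h2 := ih (fun z => y (Fin.cons false z))
    have h3 := ih (fun z => y (Fin.cons true z))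
    nlinarith

lemma gramQ_pos (t : ℝ) (ht0 : 0 < t) (ht1 : t < 1) :
    ∀ (n : ℕ) (y : (Fin n → Bool) → ℝ), y ≠ 0 → 0 < gramQ t n y := by
  intro n
  induction n with
  | zero =>
    intro y hy
    rw [gramQ_zero]
    have hyd : y (fun i => i.elim0) ≠ 0 := by
      intro h
      apply hy
      funext a
      have ha : a = (fun i : Fin 0 => i.elim0) := funext fun i => i.elim0
      rw [ha, h]
      rfl
    exact mul_self_pos.mpr hyd
  | succ n ih =>
    intro y hy
    obtain ⟨a, ha⟩ : ∃ a, y a ≠ 0 := by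
      by_contra h
      push_neg at h
      exact hy (funext fun a => h a)
    have hcons : y (Fin.cons (a 0) (Fin.tail a)) ≠ 0 := by
      rwa [Fin.cons_self_tail]
    rw [gramQ_succ]
    have h1 := gramQ_nonneg t ht0 ht1 n (fun z => y (Fin.cons false z) + y (Fin.cons true z))
    have h2 := gramQ_nonneg t ht0 ht1 n (fun z => y (Fin.cons false z))
    have h3 := gramQ_nonneg t ht0 ht1 n (fun z => y (Fin.cons true z))
    have hpos : 0 < gramQ t n (fun z => y (Fin.cons false z))
        + gramQ t n (fun z => y (Fin.cons true z)) := by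
      cases hb : a 0 with
      | false =>
        have hne : (fun z => y (Fin.cons false z)) ≠ 0 := by
          intro h
          apply hcons
          rw [hb]
          exact congrFun h (Fin.tail a)
        have := ih _ hne
        linarith
      | true =>
        have hne : (fun z => y (Fin.cons true z)) ≠ 0 := by
          intro h
          apply hcons
          rw [hb]
          exact congrFun h (Fin.tail a)
        have := ih _ hne
        linarith
    nlinarith

/-- Key inductive inequality: if `y` is supported on `S`, then
`(∑ y)² ≤ |S| · Q(y)`. -/
lemma sq_sum_le_card_mul_gramQ (t : ℝ) (ht0 : 0 < t) (ht1 : t < 1) :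
    ∀ (n : ℕ) (S : Finset (Fin n → Bool)) (y : (Fin n → Bool) → ℝ),
      (∀ a, a ∉ S → y a = 0) →
      (∑ a : Fin n → Bool, y a) ^ 2 ≤ (S.card : ℝ) * gramQ t n y := by
  intro n
  induction n with
  | zero =>
    intro S y hy
    rw [Fintype.sum_subsingleton _ (fun i : Fin 0 => i.elim0), gramQ_zero]
    by_cases hd : (fun i : Fin 0 => i.elim0) ∈ S
    · have h1 : (1 : ℝ) ≤ (S.card : ℝ) := by
        exact_mod_cast Finset.card_pos.mpr ⟨_, hd⟩
      have h2 := mul_le_mul_of_nonneg_right h1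
        (mul_self_nonneg (y (fun i : Fin 0 => i.elim0)))
      nlinarith [mul_self_nonneg (y (fun i : Fin 0 => i.elim0))]
    · have h0 : y (fun i : Fin 0 => i.elim0) = 0 := hy _ hd
      rw [h0]
      simp
  | succ n ih =>
    intro S y hy
    set u : (Fin n → Bool) → ℝ := fun z => y (Fin.cons false z) with hu
    set v : (Fin n → Bool) → ℝ := fun z => y (Fin.cons true z) with hv
    set S0 : Finset (Fin n → Bool) :=
      univ.filter (fun z => (Fin.cons false z : Fin (n+1) → Bool) ∈ S) with hS0
    set S1 : Finset (Fin n → Bool) :=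
      univ.filter (fun z => (Fin.cons true z : Fin (n+1) → Bool) ∈ S) with hS1
    have hu0 : ∀ z, z ∉ S0 → u z = 0 := by
      intro z hz
      apply hy
      intro hmem
      exact hz (Finset.mem_filter.mpr ⟨Finset.mem_univ _, hmem⟩)
    have hv0 : ∀ z, z ∉ S1 → v z = 0 := by
      intro z hz
      apply hy
      intro hmem
      exact hz (Finset.mem_filter.mpr ⟨Finset.mem_univ _, hmem⟩)
    have huv0 : ∀ z, z ∉ S0 ∪ S1 → u z + v z = 0 := by
      intro z hz
      rw [Finset.mem_union] at hz
      push_neg at hz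
      rw [hu0 z hz.1, hv0 z hz.2, add_zero]
    have h0 := ih S0 u hu0
    have h1 := ih S1 v hv0
    have h2 := ih (S0 ∪ S1) (fun z => u z + v z) huv0
    have hcard : S0.card + S1.card ≤ S.card := by
      have hinj0 : Function.Injective
          (fun z : Fin n → Bool => (Fin.cons false z : Fin (n+1) → Bool)) := by
        intro z w h
        have := congrArg Fin.tail h
        simpa [Fin.tail_cons] using this
      have hinj1 : Function.Injective
          (fun z : Fin n → Bool => (Fin.cons true z : Fin (n+1) → Bool)) := by
        intro z w h
        have := congrArg Fin.tail h
        simpa [Fin.tail_cons] using this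
      have hsub : (S0.image (fun z => (Fin.cons false z : Fin (n+1) → Bool)))
          ∪ (S1.image (fun z => (Fin.cons true z : Fin (n+1) → Bool))) ⊆ S := by
        intro a ha
        rw [Finset.mem_union] at ha
        rcases ha with ha | ha <;> {
          rw [Finset.mem_image] at ha
          obtain ⟨z, hz, rfl⟩ := ha
          exact (Finset.mem_filter.mp hz).2 }
      have hdisj : Disjoint (S0.image (fun z => (Fin.cons false z : Fin (n+1) → Bool)))
          (S1.image (fun z => (Fin.cons true z : Fin (n+1) → Bool))) := by
        rw [Finset.disjoint_left]
        intro a ha0 ha1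
        rw [Finset.mem_image] at ha0 ha1
        obtain ⟨z, _, rfl⟩ := ha0
        obtain ⟨w, _, hw⟩ := ha1
        have := congrFun hw 0
        simp [Fin.cons_zero] at this
      calc S0.card + S1.card
          = (S0.image (fun z => (Fin.cons false z : Fin (n+1) → Bool))).card
            + (S1.image (fun z => (Fin.cons true z : Fin (n+1) → Bool))).card := by
            rw [Finset.card_image_of_injective _ hinj0, Finset.card_image_of_injective _ hinj1]
        _ = ((S0.image (fun z => (Fin.cons false z : Fin (n+1) → Bool)))
            ∪ (S1.image (fun z => (Fin.cons true z : Fin (n+1) → Bool)))).card := by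
            rw [Finset.card_union_of_disjoint hdisj]
        _ ≤ S.card := Finset.card_le_card hsub
    have hm : ((S0 ∪ S1).card : ℝ) ≤ (S0.card : ℝ) + (S1.card : ℝ) := by
      exact_mod_cast Finset.card_union_le S0 S1
    have hsum : ∑ a : Fin (n+1) → Bool, y a = (∑ z, u z) + ∑ z, v z := sum_cube_succ n y
    have hQsucc := gramQ_succ t n y
    have hQ1 : 0 ≤ gramQ t n (fun z => u z + v z) := gramQ_nonneg t ht0 ht1 n _
    have hQu : 0 ≤ gramQ t n u := gramQ_nonneg t ht0 ht1 n u
    have hQv : 0 ≤ gramQ t n v := gramQ_nonneg t ht0 ht1 n v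
    set p : ℝ := ∑ z, u z
    set q : ℝ := ∑ z, v z
    set A : ℝ := (S0.card : ℝ)
    set B : ℝ := (S1.card : ℝ)
    have hA : 0 ≤ A := Nat.cast_nonneg _
    have hB : 0 ≤ B := Nat.cast_nonneg _
    have hC : A + B ≤ (S.card : ℝ) := by
      have : ((S0.card + S1.card : ℕ) : ℝ) ≤ (S.card : ℝ) := by exact_mod_cast hcard
      push_cast at this
      linarith
    have hsum2 : ∑ z, (u z + v z) = p + q := by rw [Finset.sum_add_distrib]
    rw [hsum2] at h2
    have hkey : (p + q) ^ 2 ≤ (A + B) * (gramQ t n u + gramQ t n v) := by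
      have hprod : (p * q) ^ 2 ≤ (A * gramQ t n u) * (B * gramQ t n v) := by
        calc (p * q) ^ 2 = p ^ 2 * q ^ 2 := by ring
          _ ≤ (A * gramQ t n u) * (B * gramQ t n v) :=
              mul_le_mul h0 h1 (sq_nonneg q) (by nlinarith [sq_nonneg p])
      have hα : 0 ≤ B * gramQ t n u := mul_nonneg hB hQu
      have hβ : 0 ≤ A * gramQ t n v := mul_nonneg hA hQv
      have h2pq : 2 * (p * q) ≤ B * gramQ t n u + A * gramQ t n v := by
        nlinarith [sq_nonneg (B * gramQ t n u - A * gramQ t n v), hprod, hα, hβ]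
      nlinarith [h0, h1]
    rw [hsum, hQsucc]
    have hQ1' : (p + q) ^ 2 ≤ (A + B) * gramQ t n (fun z => u z + v z) := by
      calc (p + q) ^ 2 ≤ ((S0 ∪ S1).card : ℝ) * gramQ t n (fun z => u z + v z) := h2
        _ ≤ (A + B) * gramQ t n (fun z => u z + v z) :=
            mul_le_mul_of_nonneg_right hm hQ1
    have hform : 0 ≤ t * gramQ t n (fun z => u z + v z)
        + (1 - t) * (gramQ t n u + gramQ t n v) := by nlinarith
    calc (p + q) ^ 2
        = t * (p + q) ^ 2 + (1 - t) * (p + q) ^ 2 := by ring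
      _ ≤ t * ((A + B) * gramQ t n (fun z => u z + v z))
          + (1 - t) * ((A + B) * (gramQ t n u + gramQ t n v)) := by
          apply add_le_add
          · exact mul_le_mul_of_nonneg_left hQ1' (le_of_lt ht0)
          · exact mul_le_mul_of_nonneg_left hkey (by linarith)
      _ = (A + B) * (t * gramQ t n (fun z => u z + v z)
          + (1 - t) * (gramQ t n u + gramQ t n v)) := by ring
      _ ≤ (S.card : ℝ) * (t * gramQ t n (fun z => u z + v z)
          + (1 - t) * (gramQ t n u + gramQ t n v)) :=
          mul_le_mul_of_nonneg_right hC hform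

/-- The Gram matrix `G_{ij} = t^{|xⁱ ⊕ xʲ|}` of distinct bit strings is invertible,
positive definite, and the sum of the entries of its inverse is at most `χ`. -/
theorem gram_matrix_bound (n χ : ℕ) (t : ℝ) (ht0 : 0 < t) (ht1 : t < 1)
    (x : Fin χ → (Fin n → Bool)) (hx : Function.Injective x) :
    IsUnit (Matrix.of fun i j => t ^ hammingDist (x i) (x j) : Matrix (Fin χ) (Fin χ) ℝ)
    ∧ (Matrix.of fun i j => t ^ hammingDist (x i) (x j) : Matrix (Fin χ) (Fin χ) ℝ).PosDef
    ∧ ∑ i, ∑ j,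
        (Matrix.of fun i j => t ^ hammingDist (x i) (x j) : Matrix (Fin χ) (Fin χ) ℝ)⁻¹ i j
      ≤ (χ : ℝ) := by
  set G : Matrix (Fin χ) (Fin χ) ℝ :=
    Matrix.of fun i j => t ^ hammingDist (x i) (x j) with hG
  set S : Finset (Fin n → Bool) := Finset.image x Finset.univ with hS
  set lift : (Fin χ → ℝ) → (Fin n → Bool) → ℝ :=
    fun v a => ∑ i, if x i = a then v i else 0 with hlift
  have hlift_x : ∀ (v : Fin χ → ℝ) (i : Fin χ), lift v (x i) = v i := by
    intro v i
    rw [hlift]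
    simp only
    rw [Finset.sum_eq_single i]
    · simp
    · intro j _ hj
      rw [if_neg (fun h => hj (hx h))]
    · intro h
      exact absurd (Finset.mem_univ i) h
  have hsupp : ∀ v : Fin χ → ℝ, ∀ a, a ∉ S → lift v a = 0 := by
    intro v a ha
    rw [hlift]
    simp only
    apply Finset.sum_eq_zero
    intro i _
    rw [if_neg]
    intro h
    exact ha (Finset.mem_image.mpr ⟨i, Finset.mem_univ i, h⟩)
  have hlift_sum : ∀ v : Fin χ → ℝ, ∑ a : Fin n → Bool, lift v a = ∑ i, v i := by
    intro v
    rw [hlift]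
    simp only
    rw [Finset.sum_comm]
    apply Finset.sum_congr rfl
    intro i _
    rw [Finset.sum_ite_eq univ (x i) (fun _ => v i)]
    simp
  have hxinj : ∀ i ∈ (univ : Finset (Fin χ)), ∀ j ∈ (univ : Finset (Fin χ)),
      x i = x j → i = j := fun i _ j _ h => hx h
  have hbridge : ∀ v : Fin χ → ℝ,
      gramQ t n (lift v) = ∑ i, ∑ j, v i * v j * t ^ hammingDist (x i) (x j) := by
    intro v
    have h1 : gramQ t n (lift v)
        = ∑ a ∈ S, ∑ b ∈ S, lift v a * lift v b * t ^ hammingDist a b := by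
      unfold gramQ
      refine (Finset.sum_subset (Finset.subset_univ S) ?_).symm.trans ?_
      · intro a _ ha
        apply Finset.sum_eq_zero
        intro b _
        rw [hsupp v a ha]
        ring
      · apply Finset.sum_congr rfl
        intro a _
        refine (Finset.sum_subset (Finset.subset_univ S) ?_).symm
        intro b _ hb
        rw [hsupp v b hb]
        ring
    rw [h1, hS, Finset.sum_image hxinj]
    apply Finset.sum_congr rfl
    intro i _
    rw [Finset.sum_image hxinj]
    apply Finset.sum_congr rfl
    intro j _
    rw [hlift_x, hlift_x]
  have hlift_ne : ∀ v : Fin χ → ℝ, v ≠ 0 → lift v ≠ 0 := by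
    intro v hv h
    apply hv
    funext i
    have := congrFun h (x i)
    rw [hlift_x v i] at this
    exact this
  have hPD : G.PosDef := by
    rw [Matrix.posDef_iff_dotProduct_mulVec]
    constructor
    · show G.conjTranspose = G
      ext i j
      simp only [Matrix.conjTranspose_apply, hG, Matrix.of_apply, star_trivial]
      rw [hammingDist_comm]
    · intro v hv
      have hform : dotProduct (star v) (G.mulVec v)
          = ∑ i, ∑ j, v i * v j * t ^ hammingDist (x i) (x j) := by
        simp only [dotProduct, Matrix.mulVec, star_trivial, Pi.star_apply, hG,
          Matrix.of_apply]
        apply Finset.sum_congr rfl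
        intro i _
        rw [Finset.mul_sum]
        apply Finset.sum_congr rfl
        intro j _
        ring
      rw [hform, ← hbridge v]
      exact gramQ_pos t ht0 ht1 n (lift v) (hlift_ne v hv)
  have hUnit : IsUnit G := hPD.isUnit
  refine ⟨hUnit, hPD, ?_⟩
  have hdet : IsUnit G.det := (Matrix.isUnit_iff_isUnit_det G).mp hUnit
  set v : Fin χ → ℝ := G⁻¹.mulVec (fun _ => 1) with hv
  have hGv : G.mulVec v = fun _ => 1 := by
    rw [hv, Matrix.mulVec_mulVec, Matrix.mul_nonsing_inv G hdet, Matrix.one_mulVec]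
  have hvsum : ∑ i, v i = ∑ i, ∑ j, G⁻¹ i j := by
    rw [hv]
    apply Finset.sum_congr rfl
    intro i _
    simp [Matrix.mulVec, dotProduct]
  have hQs : gramQ t n (lift v) = ∑ i, v i := by
    rw [hbridge v]
    have hrow : ∀ i : Fin χ, ∑ j, v i * v j * t ^ hammingDist (x i) (x j)
        = v i * (G.mulVec v i) := by
      intro i
      simp only [Matrix.mulVec, dotProduct, hG, Matrix.of_apply]
      rw [Finset.mul_sum]
      apply Finset.sum_congr rfl
      intro j _
      ring
    rw [Finset.sum_congr rfl fun i _ => hrow i, hGv]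
    simp only [mul_one]
  have hsnn : 0 ≤ ∑ i, v i := by
    rw [← hQs]
    exact gramQ_nonneg t ht0 ht1 n (lift v)
  have hcard : (S.card : ℝ) = (χ : ℝ) := by
    rw [hS, Finset.card_image_of_injective _ hx, Finset.card_univ, Fintype.card_fin]
  have hkey := sq_sum_le_card_mul_gramQ t ht0 ht1 n S (lift v) (hsupp v)
  rw [hlift_sum v, hQs, hcard] at hkey
  rw [← hvsum]
  rcases eq_or_lt_of_le hsnn with h | h
  · rw [← h]
    exact Nat.cast_nonneg χ
  · nlinarith
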